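/- For the two-source M/G/1/1 queue under the non-preemptive policy, the derivative at s = 0 of M̃_{A_1}(s) = λ_1 M_S(s)^2/(λ − s − λ_2 M_S(s)) equals (2λ_1 + λ_2 + μ)/(λ_1 μ), where μ = 1/E[S] and λ = λ_1 + λ_2; i.e., the average peak AoI is Ã_1 = (2λ_1 + λ_2 + μ)/(λ_1 μ). -/

import Mathlib

open Filter

/-- For the two-source M/G/1/1 queue under the non-preemptive policy, the derivative at
`s = 0` of `M̃_{A_1}(s) = λ_1 M_S(s)²/(λ - s - λ_2 M_S(s))`, with `λ = λ_1 + λ_2`,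
`M_S(0) = 1` and `M'_S(0) = E[S] = 1/μ`, equals `(2λ_1 + λ_2 + μ)/(λ_1 μ)`: the average
peak AoI is `Ã_1 = (2λ_1 + λ_2 + μ)/(λ_1 μ)`. -/
theorem avg_peak_aoi_non_preemptive (l1 l2 mu : ℝ) (MS : ℝ → ℝ)
    (hl1 : 0 < l1) (hl2 : 0 < l2) (hmu : 0 < mu)
    (hdiff : ∀ᶠ x in nhds (0 : ℝ), DifferentiableAt ℝ MS x)
    (hMS0 : MS 0 = 1) (hMS0' : deriv MS 0 = 1 / mu) :
    deriv (fun s => l1 * MS s ^ 2 / ((l1 + l2) - s - l2 * MS s)) 0 =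
      (2 * l1 + l2 + mu) / (l1 * mu) := by
  have hd : DifferentiableAt ℝ MS 0 := hdiff.self_of_nhds
  have hdMS : HasDerivAt MS (1 / mu) 0 := hMS0' ▸ hd.hasDerivAt
  have hN : HasDerivAt (fun s => l1 * MS s ^ 2) (l1 * (2 * MS 0 ^ 1 * (1 / mu))) 0 :=
    (hdMS.pow 2).const_mul l1
  have hD : HasDerivAt (fun s => (l1 + l2) - s - l2 * MS s)
      ((0 - 1) - l2 * (1 / mu)) 0 :=
    ((hasDerivAt_const 0 (l1 + l2)).sub (hasDerivAt_id 0)).sub (hdMS.const_mul l2)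
  have hD0 : ((l1 + l2) - 0 - l2 * MS 0) ≠ 0 := by rw [hMS0]; nlinarith
  have h := (hN.fun_div hD hD0).deriv
  rw [h, hMS0]
  field_simp [hl1.ne', hmu.ne']
  ring
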